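/- arXiv:1901.08503 — 4 statements merged into one kernel-verified Lean document; each statement's English description precedes it below -/
import Mathlib

section
/- The double integral ∫∫_{|b²c|≤1, |bc²|≤1} 1/max{|b|²,|c|²,1} db dc over ℝ² equals 20/3. -/
open MeasureTheory Set

noncomputable def Cfun : ℝ × ℝ → ENNReal := fun q => ENNReal.ofReal ((q.2 ^ 2)⁻¹)
def Cset : Set (ℝ × ℝ) := {q | 1 < |q.2| ∧ |q.1| ≤ (q.2 ^ 2)⁻¹}
def Aset : Set (ℝ × ℝ) := Icc (-1:ℝ) 1 ×ˢ Icc (-1:ℝ) 1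

noncomputable def Bfun : ℝ × ℝ → ENNReal := fun q => ENNReal.ofReal ((q.1 ^ 2)⁻¹)

def Bset : Set (ℝ × ℝ) := {q | 1 < |q.1| ∧ |q.2| ≤ (q.1 ^ 2)⁻¹}

lemma inner_B (b : ℝ) :
    ∫⁻ c : ℝ, Bset.indicator Bfun (b, c)
      = ({x : ℝ | 1 < |x|}).indicator (fun x => ENNReal.ofReal (2 * ((x ^ 2)⁻¹) ^ 2)) b := by
  by_cases h : 1 < |b|
  · have hb0 : b ≠ 0 := by intro h0; rw [h0] at h; simp at h; linarith
    have hb2 : (0:ℝ) < b ^ 2 := by positivity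
    have h1 : ∀ c : ℝ, Bset.indicator Bfun (b, c)
        = (Icc (-(b ^ 2)⁻¹) ((b ^ 2)⁻¹)).indicator (fun _ => ENNReal.ofReal ((b ^ 2)⁻¹)) c := by
      intro c
      simp only [Set.indicator_apply, Bset, mem_setOf_eq, mem_Icc, Bfun, h, true_and, ← abs_le]
    rw [lintegral_congr h1, lintegral_indicator measurableSet_Icc, setLIntegral_const,
      Real.volume_Icc]
    have hnn : (0:ℝ) ≤ (b ^ 2)⁻¹ := le_of_lt (by positivity)
    rw [← ENNReal.ofReal_mul hnn]
    rw [Set.indicator_of_mem (show b ∈ {x : ℝ | 1 < |x|} from h)]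
    congr 1
    ring
  · have h1 : ∀ c : ℝ, Bset.indicator Bfun (b, c) = 0 := by
      intro c
      apply Set.indicator_of_notMem
      simp only [Bset, mem_setOf_eq, not_and_or]
      exact Or.inl h
    rw [lintegral_congr h1, Set.indicator_of_notMem (by simpa using h)]
    simp


lemma absset : {x : ℝ | 1 < |x|} = Iio (-1) ∪ Ioi 1 := by
  ext x
  simp [lt_abs, mem_Iio, mem_Ioi, lt_neg, or_comm]

lemma meas_absset : MeasurableSet {x : ℝ | 1 < |x|} := by
  rw [absset]; exact measurableSet_Iio.union measurableSet_Ioi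

lemma int_Ioi : ∫⁻ x in Ioi (1:ℝ), ENNReal.ofReal (2 * ((x ^ 2)⁻¹) ^ 2)
    = ENNReal.ofReal (2/3) := by
  have hcong : ∀ x ∈ Ioi (1:ℝ), 2 * ((x ^ 2)⁻¹) ^ 2 = 2 * x ^ (-4 : ℝ) := by
    intro x hx
    have hx0 : (0:ℝ) < x := lt_trans one_pos hx
    rw [show (-4:ℝ) = -(4:ℕ) by norm_num, Real.rpow_neg hx0.le, Real.rpow_natCast]
    ring
  have hint : IntegrableOn (fun x : ℝ => 2 * x ^ (-4 : ℝ)) (Ioi 1) := by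
    exact (integrableOn_Ioi_rpow_of_lt (by norm_num) one_pos).const_mul 2
  rw [setLIntegral_congr_fun measurableSet_Ioi (fun x hx => by rw [hcong x hx])]
  have hae : 0 ≤ᵐ[volume.restrict (Ioi (1:ℝ))] fun x : ℝ => 2 * x ^ (-4 : ℝ) :=
    (ae_restrict_iff' measurableSet_Ioi).mpr (ae_of_all _ fun x hx =>
      le_of_lt (mul_pos two_pos (Real.rpow_pos_of_pos (lt_trans one_pos hx) _)))
  rw [← ofReal_integral_eq_lintegral_ofReal hint hae]
  congr 1
  rw [integral_const_mul, integral_Ioi_rpow_of_lt (by norm_num) one_pos]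
  norm_num

lemma int_Iio : ∫⁻ x in Iio (-1:ℝ), ENNReal.ofReal (2 * ((x ^ 2)⁻¹) ^ 2)
    = ENNReal.ofReal (2/3) := by
  rw [← int_Ioi]
  have hF : Measurable fun x : ℝ => ENNReal.ofReal (2 * ((x ^ 2)⁻¹) ^ 2) := by
    measurability
  have h2 : ∫⁻ x in Ioi (1:ℝ), ENNReal.ofReal (2 * ((x ^ 2)⁻¹) ^ 2)
      = ∫⁻ x in Ioi (1:ℝ), ENNReal.ofReal (2 * ((x ^ 2)⁻¹) ^ 2)
        ∂(Measure.map (fun x : ℝ => -x) volume) := by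
    rw [Measure.map_neg_eq_self (volume : Measure ℝ)]
  rw [h2, setLIntegral_map measurableSet_Ioi hF measurable_neg]
  have h1 : (fun x : ℝ => -x) ⁻¹' (Ioi 1) = Iio (-1:ℝ) := by ext x; simp [lt_neg]
  rw [h1]
  apply lintegral_congr
  intro x
  rw [neg_pow]
  norm_num

lemma outer : ∫⁻ x : ℝ, ({x : ℝ | 1 < |x|}).indicator
      (fun x => ENNReal.ofReal (2 * ((x ^ 2)⁻¹) ^ 2)) x = ENNReal.ofReal (4/3) := by
  rw [lintegral_indicator meas_absset, absset,
    lintegral_union measurableSet_Ioi (by simp [Set.disjoint_left, mem_Iio, mem_Ioi]; intros; linarith),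
    int_Ioi, int_Iio, ← ENNReal.ofReal_add (by norm_num) (by norm_num)]
  norm_num



lemma decomp : {q : ℝ × ℝ | |q.1 ^ 2 * q.2| ≤ 1 ∧ |q.1 * q.2 ^ 2| ≤ 1}
    = Aset ∪ (Bset ∪ Cset) := by
  ext ⟨b, c⟩
  simp only [mem_setOf_eq, mem_union, Aset, Bset, Cset, mem_prod, mem_Icc, ← abs_le]
  constructor
  · rintro ⟨h1, h2⟩
    rw [abs_mul, abs_of_nonneg (sq_nonneg b)] at h1
    rw [abs_mul, abs_of_nonneg (sq_nonneg c)] at h2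
    rcases le_or_gt |b| 1 with hb | hb
    · rcases le_or_gt |c| 1 with hc | hc
      · exact Or.inl ⟨hb, hc⟩
      · refine Or.inr (Or.inr ⟨hc, ?_⟩)
        have hc2 : (0:ℝ) < c ^ 2 := by nlinarith [abs_nonneg c, sq_abs c]
        rw [inv_eq_one_div, le_div_iff₀ hc2]
        linarith
    · refine Or.inr (Or.inl ⟨hb, ?_⟩)
      have hb2 : (0:ℝ) < b ^ 2 := by nlinarith [abs_nonneg b, sq_abs b]
      rw [inv_eq_one_div, le_div_iff₀ hb2]
      linarith
  · rintro (⟨hb, hc⟩ | ⟨hb, hc⟩ | ⟨hc, hb⟩)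
    · constructor
      · rw [abs_mul, abs_of_nonneg (sq_nonneg b), ← sq_abs b]
        nlinarith [abs_nonneg b, abs_nonneg c]
      · rw [abs_mul, abs_of_nonneg (sq_nonneg c), ← sq_abs c]
        nlinarith [abs_nonneg b, abs_nonneg c]
    · have hb2 : (1:ℝ) < b ^ 2 := by nlinarith [abs_nonneg b, sq_abs b]
      have hb2' : (0:ℝ) < b ^ 2 := by linarith
      constructor
      · rw [abs_mul, abs_of_nonneg (sq_nonneg b)]
        calc b ^ 2 * |c| ≤ b ^ 2 * (b ^ 2)⁻¹ :=
              mul_le_mul_of_nonneg_left hc (sq_nonneg b)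
          _ = 1 := mul_inv_cancel₀ hb2'.ne'
      · rw [abs_mul, abs_of_nonneg (sq_nonneg c)]
        have h5 : c ^ 2 ≤ ((b ^ 2)⁻¹) ^ 2 := by
          rw [← sq_abs c]
          exact pow_le_pow_left₀ (abs_nonneg c) hc 2
        have h6 : |b| * ((b ^ 2)⁻¹) ^ 2 = (|b| ^ 3)⁻¹ := by
          have hb0 : b ≠ 0 := by intro h0; rw [h0] at hb2'; simp at hb2'
          have habs : |b| ≠ 0 := abs_ne_zero.mpr hb0
          rw [← sq_abs b]
          field_simp
        calc |b| * c ^ 2 ≤ |b| * ((b ^ 2)⁻¹) ^ 2 :=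
              mul_le_mul_of_nonneg_left h5 (abs_nonneg b)
          _ = (|b| ^ 3)⁻¹ := h6
          _ ≤ 1 := inv_le_one_of_one_le₀ (one_le_pow₀ hb.le)
    · have hc2 : (1:ℝ) < c ^ 2 := by nlinarith [abs_nonneg c, sq_abs c]
      have hc2' : (0:ℝ) < c ^ 2 := by linarith
      constructor
      · rw [abs_mul, abs_of_nonneg (sq_nonneg b)]
        have h5 : b ^ 2 ≤ ((c ^ 2)⁻¹) ^ 2 := by
          rw [← sq_abs b]
          exact pow_le_pow_left₀ (abs_nonneg b) hb 2
        have h6 : ((c ^ 2)⁻¹) ^ 2 * |c| = (|c| ^ 3)⁻¹ := by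
          have hc0 : c ≠ 0 := by intro h0; rw [h0] at hc2'; simp at hc2'
          have habs : |c| ≠ 0 := abs_ne_zero.mpr hc0
          rw [← sq_abs c]
          field_simp
        calc b ^ 2 * |c| ≤ ((c ^ 2)⁻¹) ^ 2 * |c| :=
              mul_le_mul_of_nonneg_right h5 (abs_nonneg c)
          _ = (|c| ^ 3)⁻¹ := h6
          _ ≤ 1 := inv_le_one_of_one_le₀ (one_le_pow₀ hc.le)
      · rw [abs_mul, abs_of_nonneg (sq_nonneg c)]
        calc |b| * c ^ 2 ≤ (c ^ 2)⁻¹ * c ^ 2 :=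
              mul_le_mul_of_nonneg_right hb (sq_nonneg c)
          _ = 1 := inv_mul_cancel₀ hc2'.ne'

lemma disjAB : Disjoint Aset Bset := by
  rw [Set.disjoint_left]
  rintro ⟨b, c⟩ hA hB
  simp only [Aset, Bset, mem_prod, mem_Icc, mem_setOf_eq, ← abs_le] at hA hB
  linarith [hA.1, hB.1]

lemma disjAC : Disjoint Aset Cset := by
  rw [Set.disjoint_left]
  rintro ⟨b, c⟩ hA hC
  simp only [Aset, Cset, mem_prod, mem_Icc, mem_setOf_eq, ← abs_le] at hA hC
  linarith [hA.2, hC.1]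

lemma disjBC : Disjoint Bset Cset := by
  rw [Set.disjoint_left]
  rintro ⟨b, c⟩ hB hC
  simp only [Bset, Cset, mem_setOf_eq] at hB hC
  have hb2 : (1:ℝ) < b ^ 2 := by nlinarith [abs_nonneg b, sq_abs b, hB.1]
  have : (b ^ 2)⁻¹ < 1 := inv_lt_one_of_one_lt₀ hb2
  linarith [hB.2, hC.1]

lemma measB : MeasurableSet Bset := by
  apply MeasurableSet.inter
  · exact measurableSet_lt measurable_const measurable_fst.abs
  · exact measurableSet_le measurable_snd.abs ((measurable_fst.pow_const 2).inv)

lemma measC : MeasurableSet Cset := by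
  apply MeasurableSet.inter
  · exact measurableSet_lt measurable_const measurable_snd.abs
  · exact measurableSet_le measurable_fst.abs ((measurable_snd.pow_const 2).inv)

lemma measA : MeasurableSet Aset := measurableSet_Icc.prod measurableSet_Icc

lemma g_on_A {q : ℝ × ℝ} (hq : q ∈ Aset) :
    1 / max (max (|q.1| ^ 2) (|q.2| ^ 2)) 1 = 1 := by
  obtain ⟨hb, hc⟩ := hq
  rw [mem_Icc, ← abs_le] at hb hc
  have h1 : |q.1| ^ 2 ≤ 1 := by nlinarith [abs_nonneg q.1]
  have h2 : |q.2| ^ 2 ≤ 1 := by nlinarith [abs_nonneg q.2]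
  rw [max_eq_right (max_le h1 h2), div_one]

lemma g_on_B {q : ℝ × ℝ} (hq : q ∈ Bset) :
    1 / max (max (|q.1| ^ 2) (|q.2| ^ 2)) 1 = (q.1 ^ 2)⁻¹ := by
  obtain ⟨h1, h2⟩ := hq
  have hb2 : 1 < |q.1| ^ 2 := by nlinarith [abs_nonneg q.1]
  have hinv : (q.1 ^ 2)⁻¹ < 1 := inv_lt_one_of_one_lt₀ (by rwa [sq_abs] at hb2)
  have hc1 : |q.2| < 1 := lt_of_le_of_lt h2 hinv
  have hcb : |q.2| ^ 2 ≤ |q.1| ^ 2 := by nlinarith [abs_nonneg q.2]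
  rw [max_eq_left hcb, max_eq_left (le_of_lt hb2), one_div, sq_abs]

lemma g_on_C {q : ℝ × ℝ} (hq : q ∈ Cset) :
    1 / max (max (|q.1| ^ 2) (|q.2| ^ 2)) 1 = (q.2 ^ 2)⁻¹ := by
  obtain ⟨h1, h2⟩ := hq
  have hc2 : 1 < |q.2| ^ 2 := by nlinarith [abs_nonneg q.2]
  have hinv : (q.2 ^ 2)⁻¹ < 1 := inv_lt_one_of_one_lt₀ (by rwa [sq_abs] at hc2)
  have hb1 : |q.1| < 1 := lt_of_le_of_lt h2 hinv
  have hbc : |q.1| ^ 2 ≤ |q.2| ^ 2 := by nlinarith [abs_nonneg q.1]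
  rw [max_eq_right hbc, max_eq_left (le_of_lt hc2), one_div, sq_abs]



lemma measBfun : Measurable Bfun :=
  ENNReal.measurable_ofReal.comp ((measurable_fst.pow_const 2).inv)

lemma measCfun : Measurable Cfun :=
  ENNReal.measurable_ofReal.comp ((measurable_snd.pow_const 2).inv)

lemma Aval : ∫⁻ q in Aset, ENNReal.ofReal (1 / max (max (|q.1| ^ 2) (|q.2| ^ 2)) 1)
    = ENNReal.ofReal 4 := by
  have h1 : ∫⁻ q in Aset, ENNReal.ofReal (1 / max (max (|q.1| ^ 2) (|q.2| ^ 2)) 1)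
      = ∫⁻ _q in Aset, ENNReal.ofReal 1 :=
    setLIntegral_congr_fun measA (fun q hq => by rw [g_on_A hq])
  rw [h1, setLIntegral_const]
  have h2 : volume Aset = ENNReal.ofReal 4 := by
    simp only [Aset]
    rw [Measure.volume_eq_prod, Measure.prod_prod, Real.volume_Icc,
      ← ENNReal.ofReal_mul (by norm_num)]
    norm_num
  rw [h2, ENNReal.ofReal_one, one_mul]

lemma Bval : ∫⁻ q in Bset, ENNReal.ofReal (1 / max (max (|q.1| ^ 2) (|q.2| ^ 2)) 1)
    = ENNReal.ofReal (4/3) := by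
  have h1 : ∫⁻ q in Bset, ENNReal.ofReal (1 / max (max (|q.1| ^ 2) (|q.2| ^ 2)) 1)
      = ∫⁻ q in Bset, Bfun q :=
    setLIntegral_congr_fun measB (fun q hq => by rw [g_on_B hq]; rfl)
  rw [h1, ← lintegral_indicator measB, Measure.volume_eq_prod,
    lintegral_prod _ ((measBfun.indicator measB).aemeasurable)]
  rw [lintegral_congr fun b => inner_B b]
  exact outer

lemma Cval : ∫⁻ q in Cset, ENNReal.ofReal (1 / max (max (|q.1| ^ 2) (|q.2| ^ 2)) 1)
    = ENNReal.ofReal (4/3) := by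
  have h1 : ∫⁻ q in Cset, ENNReal.ofReal (1 / max (max (|q.1| ^ 2) (|q.2| ^ 2)) 1)
      = ∫⁻ q in Cset, Cfun q :=
    setLIntegral_congr_fun measC (fun q hq => by rw [g_on_C hq]; rfl)
  rw [h1, ← lintegral_indicator measC, Measure.volume_eq_prod,
    lintegral_prod_symm _ ((measCfun.indicator measC).aemeasurable)]
  have key : ∀ x y : ℝ, Cset.indicator Cfun (x, y) = Bset.indicator Bfun (y, x) := by
    intro x y
    by_cases h : (x, y) ∈ Cset
    · rw [indicator_of_mem h, indicator_of_mem (show (y, x) ∈ Bset from ⟨h.1, h.2⟩)]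
      rfl
    · rw [indicator_of_notMem h,
        indicator_of_notMem (show (y, x) ∉ Bset from fun hB => h ⟨hB.1, hB.2⟩)]
  calc ∫⁻ y : ℝ, ∫⁻ x : ℝ, Cset.indicator Cfun (x, y)
      = ∫⁻ y : ℝ, ∫⁻ x : ℝ, Bset.indicator Bfun (y, x) := by
        exact lintegral_congr fun y => lintegral_congr fun x => key x y
    _ = ∫⁻ y : ℝ, ({x : ℝ | 1 < |x|}).indicator
          (fun x => ENNReal.ofReal (2 * ((x ^ 2)⁻¹) ^ 2)) y :=
        lintegral_congr fun y => inner_B y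
    _ = ENNReal.ofReal (4/3) := outer

/-- The archimedean volume integral for `D₂`:
`∫∫_{|b²c|≤1, |bc²|≤1} 1 / max{|b|², |c|², 1} db dc = 20/3`. -/
theorem integral_case_V_a :
    (∫ q in {q : ℝ × ℝ | |q.1 ^ 2 * q.2| ≤ 1 ∧ |q.1 * q.2 ^ 2| ≤ 1},
      1 / max (max (|q.1| ^ 2) (|q.2| ^ 2)) 1) = 20 / 3 := by
  have hg : Continuous fun q : ℝ × ℝ => 1 / max (max (|q.1| ^ 2) (|q.2| ^ 2)) 1 := by
    apply Continuous.div continuous_const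
    · exact ((continuous_fst.abs.pow 2).max (continuous_snd.abs.pow 2)).max continuous_const
    · exact fun q => ne_of_gt (lt_of_lt_of_le one_pos (le_max_right _ _))
  rw [MeasureTheory.integral_eq_lintegral_of_nonneg_ae
    (ae_of_all _ fun q : ℝ × ℝ => by positivity)
    hg.aestronglyMeasurable.restrict]
  rw [decomp, lintegral_union (measB.union measC) (disjoint_union_right.mpr ⟨disjAB, disjAC⟩),
    lintegral_union measC disjBC, Aval, Bval, Cval,
    ← ENNReal.ofReal_add (by norm_num) (by norm_num),
    ← ENNReal.ofReal_add (by norm_num) (by norm_num),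
    ENNReal.toReal_ofReal (by norm_num)]
  norm_num
end

section
/- Let μ(a,c) be Lebesgue measure on ℝ². Then the sum of the three integrals I₁ = ∫_{|a|≤1, |a²c|≤1} 1/max{|c|²,1} dμ, I₂ = ∫_{|a|>1, |c|≤|a|} |a|^{-3} dμ, and I₃ = ∫_{|c|>|a|, |a²c|>1} 1/max{|c|², |a²c|} dμ equals 20. -/
open MeasureTheory Set Filter

section ResidueAux

lemma invsq_int {b : ℝ} (hb : 0 < b) :
    IntegrableOn (fun r : ℝ => (r ^ 2)⁻¹) (Ioi b) ∧
      ∫ r in Ioi b, (r ^ 2)⁻¹ = b⁻¹ := by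
  have hderiv : ∀ x ∈ Ici b, HasDerivAt (fun y : ℝ => -y⁻¹) ((x ^ 2)⁻¹) x := by
    intro x hx
    have hx0 : x ≠ 0 := (hb.trans_le hx).ne'
    simpa using (hasDerivAt_inv hx0).fun_neg
  have hpos : ∀ x ∈ Ioi b, 0 ≤ (x ^ 2)⁻¹ := fun x _ => by positivity
  have htend : Tendsto (fun y : ℝ => -y⁻¹) atTop (nhds 0) := by
    simpa using (tendsto_inv_atTop_zero (𝕜 := ℝ)).neg
  refine ⟨integrableOn_Ioi_deriv_of_nonneg' hderiv hpos htend, ?_⟩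
  rw [integral_Ioi_of_hasDerivAt_of_nonneg' hderiv hpos htend]
  simp

lemma logsq_int :
    IntegrableOn (fun r : ℝ => (Real.log r + 1) * (r ^ 2)⁻¹) (Ioi 1) ∧
      ∫ r in Ioi (1:ℝ), (Real.log r + 1) * (r ^ 2)⁻¹ = 2 := by
  have hderiv : ∀ x ∈ Ici (1:ℝ), HasDerivAt (fun y : ℝ => -(Real.log y + 2) * y⁻¹)
      ((Real.log x + 1) * (x ^ 2)⁻¹) x := by
    intro x hx
    have hx0 : (0:ℝ) < x := lt_of_lt_of_le one_pos hx
    have h := (((Real.hasDerivAt_log hx0.ne').add_const 2).fun_neg).fun_mul (hasDerivAt_inv hx0.ne')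
    refine h.congr_deriv ?_
    ring
  have hpos : ∀ x ∈ Ioi (1:ℝ), 0 ≤ (Real.log x + 1) * (x ^ 2)⁻¹ := fun x hx => by
    have : 0 ≤ Real.log x := Real.log_nonneg (le_of_lt hx)
    positivity
  have htend : Tendsto (fun y : ℝ => -(Real.log y + 2) * y⁻¹) atTop (nhds 0) := by
    have h1 : Tendsto (fun x : ℝ => Real.log x ^ 1 / (1 * x + 0)) atTop (nhds 0) :=
      Real.tendsto_pow_log_div_mul_add_atTop 1 0 1 one_ne_zero
    simp only [pow_one, one_mul, add_zero] at h1
    have h2 := (h1.neg).sub ((tendsto_inv_atTop_zero (𝕜 := ℝ)).const_mul 2)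
    simp only [neg_zero, mul_zero, sub_zero] at h2
    refine h2.congr fun x => by rw [div_eq_mul_inv]; ring
  refine ⟨integrableOn_Ioi_deriv_of_nonneg' hderiv hpos htend, ?_⟩
  rw [integral_Ioi_of_hasDerivAt_of_nonneg' hderiv hpos htend]
  norm_num

lemma integrable_comp_abs {f : ℝ → ℝ} (hf : IntegrableOn f (Ioi 0)) :
    Integrable fun x : ℝ => f |x| := by
  have hf' : IntegrableOn (fun x => f |x|) (Ioi 0) :=
    hf.congr_fun (fun x hx => by rw [abs_eq_self.mpr (le_of_lt hx)]) measurableSet_Ioi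
  have int_Iic : IntegrableOn (fun x ↦ f |x|) (Iic 0) := by
    rw [← Measure.map_neg_eq_self (volume : Measure ℝ)]
    have m : MeasurableEmbedding fun x : ℝ => -x := (Homeomorph.neg ℝ).measurableEmbedding
    rw [m.integrableOn_map_iff]
    simp_rw [Function.comp_def, abs_neg, neg_preimage, neg_Iic, neg_zero]
    exact Iff.mpr integrableOn_Ici_iff_integrableOn_Ioi hf'
  rw [← integrableOn_univ, ← Iic_union_Ioi (a := (0:ℝ))]
  exact int_Iic.union hf'


lemma fubini_aux {f : ℝ × ℝ → ℝ} {g : ℝ → ℝ}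
    (hf : Measurable f) (hf0 : ∀ q, 0 ≤ f q)
    (hg : Integrable g) (hg0 : ∀ a, 0 ≤ g a)
    (h : ∀ᵐ a : ℝ, ∫⁻ c, ENNReal.ofReal (f (a, c)) = ENNReal.ofReal (g a)) :
    ∫ q, f q = ∫ a, g a := by
  have h1 : ∫⁻ q : ℝ × ℝ, ENNReal.ofReal (f q) = ENNReal.ofReal (∫ a, g a) := by
    rw [Measure.volume_eq_prod ℝ ℝ, lintegral_prod _ (hf.ennreal_ofReal.aemeasurable)]
    rw [lintegral_congr_ae h]
    rw [← ofReal_integral_eq_lintegral_ofReal hg (ae_of_all _ hg0)]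
  rw [integral_eq_lintegral_of_nonneg_ae (ae_of_all _ hf0) hf.aestronglyMeasurable, h1,
    ENNReal.toReal_ofReal (integral_nonneg hg0)]

lemma ae_ne_zero : ∀ᵐ a : ℝ, a ≠ 0 := by
  refine ae_iff.mpr ?_
  simp [not_not]

lemma I2 : (∫ q in {q : ℝ × ℝ | 1 < |q.1| ∧ |q.2| ≤ |q.1|}, 1 / |q.1| ^ 3) = 4 := by
  set S : Set (ℝ × ℝ) := {q : ℝ × ℝ | 1 < |q.1| ∧ |q.2| ≤ |q.1|} with hSdef
  have hSm : MeasurableSet S :=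
    (measurableSet_lt measurable_const measurable_fst.abs).inter
      (measurableSet_le measurable_snd.abs measurable_fst.abs)
  set G : ℝ → ℝ := fun x => if 1 < x then 2 * (x ^ 2)⁻¹ else 0 with hGdef
  have hG0 : ∀ x, 0 ≤ G x := by
    intro x; rw [hGdef]; dsimp only; split <;> positivity
  have hGeq : EqOn G ((Ioi 1).indicator fun x => 2 * (x ^ 2)⁻¹) (Ioi 0) := by
    intro x _; simp [hGdef, indicator_apply, mem_Ioi]
  have hGint : IntegrableOn G (Ioi 0) := by
    refine (IntegrableOn.congr_fun ?_ hGeq.symm measurableSet_Ioi)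
    refine ((integrable_indicator_iff measurableSet_Ioi).mpr
      ((invsq_int one_pos).1.const_mul 2)).integrableOn
  have key : (∫ q in S, 1 / |q.1| ^ 3) = ∫ a : ℝ, G |a| := by
    rw [← integral_indicator hSm]
    refine fubini_aux ?_ ?_ (integrable_comp_abs hGint) (fun a => hG0 _) ?_
    · exact (measurable_const.div (measurable_fst.abs.pow_const 3)).indicator hSm
    · intro q; exact indicator_nonneg (fun q _ => by positivity) q
    · filter_upwards [ae_ne_zero] with a ha
      by_cases h1 : 1 < |a|
      · set H : ℝ → ℝ := fun r => if r ≤ |a| then 1 / |a| ^ 3 else 0 with hHdef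
        have hpt : ∀ c, S.indicator (fun q : ℝ × ℝ => 1 / |q.1| ^ 3) (a, c) = H |c| := by
          intro c
          by_cases hc : |c| ≤ |a| <;>
            simp [hHdef, indicator_apply, hSdef, mem_setOf_eq, h1, hc]
        have hH0 : ∀ r : ℝ, 0 ≤ H r := by
          intro r; rw [hHdef]; dsimp only; split <;> positivity
        have hHeq : EqOn H ((Ioc 0 |a|).indicator fun _ => 1 / |a| ^ 3) (Ioi 0) := by
          intro r hr
          simp [hHdef, indicator_apply, mem_Ioc, mem_Ioi.mp hr]
        have hHint : IntegrableOn H (Ioi 0) := by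
          refine IntegrableOn.congr_fun ?_ hHeq.symm measurableSet_Ioi
          refine ((integrable_indicator_iff measurableSet_Ioc).mpr
            (integrableOn_const measure_Ioc_lt_top.ne)).integrableOn
        simp_rw [hpt]
        rw [← ofReal_integral_eq_lintegral_ofReal (integrable_comp_abs hHint)
          (ae_of_all _ fun c => hH0 _), integral_comp_abs (f := H)]
        congr 1
        rw [setIntegral_congr_fun measurableSet_Ioi hHeq,
          setIntegral_indicator measurableSet_Ioc,
          inter_eq_self_of_subset_right Ioc_subset_Ioi_self, setIntegral_const]
        have ha1 : (0:ℝ) < |a| := lt_trans one_pos h1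
        rw [Real.volume_real_Ioc_of_le ha1.le]
        simp only [hGdef, h1, if_true, sub_zero, smul_eq_mul,
          ENNReal.toReal_ofReal ha1.le]
        rw [show |a| ^ 3 = |a| * (|a| ^ 2) by ring]
        field_simp
      · have hpt : ∀ c, S.indicator (fun q : ℝ × ℝ => 1 / |q.1| ^ 3) (a, c) = 0 := by
          intro c
          exact indicator_of_notMem (fun hmem => h1 hmem.1) _
        simp only [hpt, ENNReal.ofReal_zero, lintegral_zero]
        simp [hGdef, h1]
  rw [key, integral_comp_abs (f := G), setIntegral_congr_fun measurableSet_Ioi hGeq,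
    setIntegral_indicator measurableSet_Ioi,
    inter_eq_self_of_subset_right (Ioi_subset_Ioi one_pos.le),
    integral_const_mul, (invsq_int one_pos).2]
  norm_num


lemma interval_invsq {b : ℝ} (hb : 1 ≤ b) :
    ∫ x in (1:ℝ)..b, (x ^ 2)⁻¹ = 1 - b⁻¹ := by
  have hderiv : ∀ x ∈ uIcc (1:ℝ) b, HasDerivAt (fun y : ℝ => -y⁻¹) ((x ^ 2)⁻¹) x := by
    intro x hx
    rw [uIcc_of_le hb] at hx
    have hx0 : x ≠ 0 := (lt_of_lt_of_le one_pos hx.1).ne'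
    simpa using (hasDerivAt_inv hx0).fun_neg
  have hint : IntervalIntegrable (fun x : ℝ => (x ^ 2)⁻¹) volume 1 b := by
    apply ContinuousOn.intervalIntegrable
    apply ContinuousOn.inv₀ ((continuous_pow 2).continuousOn)
    intro x hx
    rw [uIcc_of_le hb] at hx
    exact pow_ne_zero 2 (lt_of_lt_of_le one_pos hx.1).ne'
  rw [intervalIntegral.integral_eq_sub_of_hasDerivAt hderiv hint]
  ring

lemma I1 : (∫ q in {q : ℝ × ℝ | |q.1| ≤ 1 ∧ |q.1 ^ 2 * q.2| ≤ 1},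
    1 / max (|q.2| ^ 2) 1) = 20 / 3 := by
  set S : Set (ℝ × ℝ) := {q : ℝ × ℝ | |q.1| ≤ 1 ∧ |q.1 ^ 2 * q.2| ≤ 1} with hSdef
  have hSm : MeasurableSet S :=
    (measurableSet_le measurable_fst.abs measurable_const).inter
      (measurableSet_le ((measurable_fst.pow_const 2).mul measurable_snd).abs measurable_const)
  have hφc : Continuous fun r : ℝ => 1 / max (r ^ 2) 1 :=
    continuous_const.div ((continuous_pow 2).max continuous_const)
      (fun r => ne_of_gt (lt_of_lt_of_le one_pos (le_max_right _ _)))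
  set G : ℝ → ℝ := fun x => if x ≤ 1 then 4 - 2 * x ^ 2 else 0 with hGdef
  have hG0 : ∀ a : ℝ, 0 ≤ G |a| := by
    intro a; rw [hGdef]; dsimp only
    split
    · nlinarith [abs_nonneg a, sq_nonneg (|a| - 1), abs_nonneg a]
    · exact le_rfl
  have hGeq : EqOn G ((Ioc 0 1).indicator fun x => 4 - 2 * x ^ 2) (Ioi 0) := by
    intro x hx
    simp [hGdef, indicator_apply, mem_Ioc, mem_Ioi.mp hx]
  have hGint : IntegrableOn G (Ioi 0) := by
    refine IntegrableOn.congr_fun ?_ hGeq.symm measurableSet_Ioi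
    exact ((integrable_indicator_iff measurableSet_Ioc).mpr
      ((continuous_const.sub (continuous_const.mul (continuous_pow 2))).integrableOn_Ioc)).integrableOn
  have key : (∫ q in S, 1 / max (|q.2| ^ 2) 1) = ∫ a : ℝ, G |a| := by
    rw [← integral_indicator hSm]
    refine fubini_aux ?_ ?_ (integrable_comp_abs hGint) hG0 ?_
    · exact (measurable_const.div
        ((measurable_snd.abs.pow_const 2).max measurable_const)).indicator hSm
    · intro q; exact indicator_nonneg (fun q _ => by positivity) q
    · filter_upwards [ae_ne_zero] with a ha
      by_cases h1 : |a| ≤ 1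
      · have ha2 : (0:ℝ) < a ^ 2 := by positivity
        have ha2le : a ^ 2 ≤ 1 := by nlinarith [abs_nonneg a, sq_abs a]
        have hb0 : (0:ℝ) < (a ^ 2)⁻¹ := by positivity
        have hb1 : (1:ℝ) ≤ (a ^ 2)⁻¹ := one_le_inv_iff₀.mpr ⟨ha2, ha2le⟩
        set H : ℝ → ℝ := fun r => if a ^ 2 * r ≤ 1 then 1 / max (r ^ 2) 1 else 0 with hHdef
        have hpt : ∀ c, S.indicator (fun q : ℝ × ℝ => 1 / max (|q.2| ^ 2) 1) (a, c) = H |c| := by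
          intro c
          by_cases hc : a ^ 2 * |c| ≤ 1 <;>
            simp [hHdef, indicator_apply, hSdef, mem_setOf_eq, h1, hc, abs_mul, abs_pow, sq_abs]
        have hH0 : ∀ r : ℝ, 0 ≤ H r := by
          intro r; rw [hHdef]; dsimp only; split <;> positivity
        have hiff : ∀ r : ℝ, (a ^ 2 * r ≤ 1 ↔ r ≤ (a ^ 2)⁻¹) := by
          intro r
          rw [← one_div, ← le_div_iff₀' ha2]
        have hHeq : EqOn H ((Ioc 0 ((a ^ 2)⁻¹)).indicator fun r => 1 / max (r ^ 2) 1) (Ioi 0) := by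
          intro r hr
          simp [hHdef, indicator_apply, mem_Ioc, mem_Ioi.mp hr, hiff r]
        have hHint : IntegrableOn H (Ioi 0) := by
          refine IntegrableOn.congr_fun ?_ hHeq.symm measurableSet_Ioi
          exact ((integrable_indicator_iff measurableSet_Ioc).mpr
            (hφc.integrableOn_Ioc)).integrableOn
        simp_rw [hpt]
        rw [← ofReal_integral_eq_lintegral_ofReal (integrable_comp_abs hHint)
          (ae_of_all _ fun c => hH0 _), integral_comp_abs (f := H)]
        congr 1
        rw [setIntegral_congr_fun measurableSet_Ioi hHeq,
          setIntegral_indicator measurableSet_Ioc,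
          inter_eq_self_of_subset_right Ioc_subset_Ioi_self]
        rw [← Ioc_union_Ioc_eq_Ioc zero_le_one hb1,
          setIntegral_union (Ioc_disjoint_Ioc_of_le le_rfl) measurableSet_Ioc
            hφc.integrableOn_Ioc hφc.integrableOn_Ioc]
        have hp1 : (∫ r in Ioc (0:ℝ) 1, 1 / max (r ^ 2) 1) = 1 := by
          rw [setIntegral_congr_fun measurableSet_Ioc
            (g := fun _ : ℝ => (1:ℝ)) ?_]
          · simp [Real.volume_Ioc]
          · intro r hr
            have : r ^ 2 ≤ 1 := by nlinarith [hr.1, hr.2]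
            simp [max_eq_right this]
        have hp2 : (∫ r in Ioc (1:ℝ) ((a ^ 2)⁻¹), 1 / max (r ^ 2) 1) = 1 - a ^ 2 := by
          rw [setIntegral_congr_fun measurableSet_Ioc
            (g := fun r : ℝ => (r ^ 2)⁻¹) ?_]
          · rw [← intervalIntegral.integral_of_le hb1, interval_invsq hb1, inv_inv]
          · intro r hr
            have : (1:ℝ) ≤ r ^ 2 := by nlinarith [hr.1]
            simp [max_eq_left this, one_div]
        rw [hp1, hp2]
        simp only [hGdef, h1, if_true, sq_abs]
        ring
      · have hpt : ∀ c, S.indicator (fun q : ℝ × ℝ => 1 / max (|q.2| ^ 2) 1) (a, c) = 0 := by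
          intro c
          exact indicator_of_notMem (fun hmem => h1 hmem.1) _
        simp only [hpt, ENNReal.ofReal_zero, lintegral_zero]
        simp [hGdef, h1]
  rw [key, integral_comp_abs (f := G), setIntegral_congr_fun measurableSet_Ioi hGeq,
    setIntegral_indicator measurableSet_Ioc,
    inter_eq_self_of_subset_right Ioc_subset_Ioi_self,
    ← intervalIntegral.integral_of_le zero_le_one]
  rw [intervalIntegral.integral_sub (f := fun _ => (4:ℝ)) (g := fun x : ℝ => 2 * x ^ 2)
    (intervalIntegrable_const)
    ((continuous_const.mul (continuous_pow 2)).intervalIntegrable 0 1 :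
      IntervalIntegrable (fun x : ℝ => 2 * x ^ 2) volume 0 1),
    intervalIntegral.integral_const_mul, integral_pow]
  simp
  norm_num


lemma I3 : (∫ q in {q : ℝ × ℝ | |q.1| < |q.2| ∧ 1 < |q.1 ^ 2 * q.2|},
    1 / max (|q.2| ^ 2) (|q.1 ^ 2 * q.2|)) = 28 / 3 := by
  set S : Set (ℝ × ℝ) := {q : ℝ × ℝ | |q.1| < |q.2| ∧ 1 < |q.1 ^ 2 * q.2|} with hSdef
  have hSm : MeasurableSet S :=
    (measurableSet_lt measurable_fst.abs measurable_snd.abs).inter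
      (measurableSet_lt measurable_const ((measurable_fst.pow_const 2).mul measurable_snd).abs)
  set G : ℝ → ℝ := fun x =>
    if x ≤ 1 then 2 * x ^ 2 else 2 * ((Real.log x + 1) * (x ^ 2)⁻¹) with hGdef
  have hG0 : ∀ a : ℝ, 0 ≤ G |a| := by
    intro a; rw [hGdef]; dsimp only
    split
    · positivity
    · rename_i h
      have h1 : (1:ℝ) ≤ |a| := (not_le.mp h).le
      have : 0 ≤ Real.log |a| := Real.log_nonneg h1
      positivity
  have hGint1 : IntegrableOn G (Ioc 0 1) := by
    refine IntegrableOn.congr_fun (f := fun x : ℝ => 2 * x ^ 2) ?_ ?_ measurableSet_Ioc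
    · exact (continuous_const.mul (continuous_pow 2)).integrableOn_Ioc
    · intro x hx; simp [hGdef, hx.2]
  have hGint2 : IntegrableOn G (Ioi 1) := by
    refine IntegrableOn.congr_fun (f := fun x : ℝ => 2 * ((Real.log x + 1) * (x ^ 2)⁻¹))
      ?_ ?_ measurableSet_Ioi
    · exact logsq_int.1.const_mul 2
    · intro x hx; simp [hGdef, not_le.mpr (mem_Ioi.mp hx)]
  have hsplit01 : Ioc (0:ℝ) 1 ∪ Ioi 1 = Ioi 0 := Ioc_union_Ioi_eq_Ioi zero_le_one
  have hGint : IntegrableOn G (Ioi 0) := by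
    rw [← hsplit01]; exact hGint1.union hGint2
  have key : (∫ q in S, 1 / max (|q.2| ^ 2) (|q.1 ^ 2 * q.2|)) = ∫ a : ℝ, G |a| := by
    rw [← integral_indicator hSm]
    refine fubini_aux ?_ ?_ (integrable_comp_abs hGint) hG0 ?_
    · exact (measurable_const.div
        ((measurable_snd.abs.pow_const 2).max
          ((measurable_fst.pow_const 2).mul measurable_snd).abs)).indicator hSm
    · intro q
      exact indicator_nonneg (fun q _ =>
        div_nonneg zero_le_one (le_trans (by positivity) (le_max_left _ _))) q
    · filter_upwards [ae_ne_zero] with a ha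
      have ha2 : (0:ℝ) < a ^ 2 := by positivity
      have ha0 : (0:ℝ) < |a| := abs_pos.mpr ha
      set H : ℝ → ℝ := fun r =>
        if |a| < r ∧ 1 < a ^ 2 * r then 1 / max (r ^ 2) (a ^ 2 * r) else 0 with hHdef
      have hpt : ∀ c, S.indicator
          (fun q : ℝ × ℝ => 1 / max (|q.2| ^ 2) (|q.1 ^ 2 * q.2|)) (a, c) = H |c| := by
        intro c
        by_cases hc : |a| < |c| ∧ 1 < a ^ 2 * |c| <;>
          simp [hHdef, indicator_apply, hSdef, mem_setOf_eq, hc, abs_mul, abs_pow, sq_abs]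
      have hH0 : ∀ r : ℝ, 0 ≤ H r := by
        intro r; rw [hHdef]; dsimp only; split
        · exact div_nonneg zero_le_one (le_trans (sq_nonneg r) (le_max_left _ _))
        · exact le_rfl
      have hiff : ∀ r : ℝ, (a ^ 2 * r ≤ 1 ↔ r ≤ (a ^ 2)⁻¹) := by
        intro r; rw [← one_div, ← le_div_iff₀' ha2]
      by_cases h1 : |a| ≤ 1
      · have ha2le : a ^ 2 ≤ 1 := by nlinarith [abs_nonneg a, sq_abs a]
        have hb0 : (0:ℝ) < (a ^ 2)⁻¹ := by positivity
        have hb1 : (1:ℝ) ≤ (a ^ 2)⁻¹ := one_le_inv_iff₀.mpr ⟨ha2, ha2le⟩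
        have hHeq : EqOn H ((Ioi ((a ^ 2)⁻¹)).indicator fun r => (r ^ 2)⁻¹) (Ioi 0) := by
          intro r hr
          by_cases hrb : (a ^ 2)⁻¹ < r
          · have hcond : |a| < r ∧ 1 < a ^ 2 * r :=
              ⟨lt_of_le_of_lt (le_trans h1 hb1) hrb,
               not_le.mp (fun hle => absurd ((hiff r).mp hle) (not_le.mpr hrb))⟩
            have hmax : max (r ^ 2) (a ^ 2 * r) = r ^ 2 := by
              have h1r : (1:ℝ) < r := lt_of_le_of_lt hb1 hrb
              apply max_eq_left
              nlinarith
            simp [hHdef, hcond, indicator_of_mem (mem_Ioi.mpr hrb), hmax, one_div]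
          · have hcond : ¬(|a| < r ∧ 1 < a ^ 2 * r) := by
              intro h
              exact absurd ((hiff r).mpr (not_lt.mp hrb)) (not_le.mpr h.2)
            simp [hHdef, hcond, indicator_of_notMem (fun hmem => hrb (mem_Ioi.mp hmem))]
        have hHint : IntegrableOn H (Ioi 0) := by
          refine IntegrableOn.congr_fun ?_ hHeq.symm measurableSet_Ioi
          exact ((integrable_indicator_iff measurableSet_Ioi).mpr (invsq_int hb0).1).integrableOn
        simp_rw [hpt]
        rw [← ofReal_integral_eq_lintegral_ofReal (integrable_comp_abs hHint)
          (ae_of_all _ fun c => hH0 _), integral_comp_abs (f := H)]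
        congr 1
        rw [setIntegral_congr_fun measurableSet_Ioi hHeq,
          setIntegral_indicator measurableSet_Ioi,
          inter_eq_self_of_subset_right (Ioi_subset_Ioi hb0.le),
          (invsq_int hb0).2, inv_inv]
        simp only [hGdef, h1, if_true, sq_abs]
      · have h1' : (1:ℝ) < |a| := not_le.mp h1
        have ha21 : (1:ℝ) < a ^ 2 := by nlinarith [sq_abs a]
        have haa2 : |a| ≤ a ^ 2 := by nlinarith [sq_abs a]
        have hφeq2 : EqOn (fun r : ℝ => (r ^ 2)⁻¹)
            (fun r : ℝ => 1 / max (r ^ 2) (a ^ 2 * r)) (Ioi (a ^ 2)) := by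
          intro r hr
          have hr' : a ^ 2 < r := mem_Ioi.mp hr
          have hmax : max (r ^ 2) (a ^ 2 * r) = r ^ 2 := by
            apply max_eq_left; nlinarith
          simp [hmax, one_div]
        have hφcont : ContinuousOn (fun r : ℝ => 1 / max (r ^ 2) (a ^ 2 * r))
            (Icc |a| (a ^ 2)) := by
          apply ContinuousOn.div continuousOn_const
          · exact ((continuous_pow 2).max (continuous_const.mul continuous_id)).continuousOn
          · intro r hr
            have hr0 : 0 < r := lt_of_lt_of_le ha0 hr.1
            have : (0:ℝ) < r ^ 2 := by positivity
            exact ne_of_gt (lt_of_lt_of_le this (le_max_left _ _))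
        have hint1 : IntegrableOn (fun r : ℝ => 1 / max (r ^ 2) (a ^ 2 * r))
            (Ioc |a| (a ^ 2)) :=
          (hφcont.integrableOn_Icc).mono_set Ioc_subset_Icc_self
        have hint2 : IntegrableOn (fun r : ℝ => 1 / max (r ^ 2) (a ^ 2 * r))
            (Ioi (a ^ 2)) :=
          IntegrableOn.congr_fun (invsq_int (lt_trans one_pos ha21)).1 hφeq2 measurableSet_Ioi
        have hsplit : Ioc |a| (a ^ 2) ∪ Ioi (a ^ 2) = Ioi |a| := Ioc_union_Ioi_eq_Ioi haa2
        have hHeq : EqOn H ((Ioi |a|).indicator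
            fun r => 1 / max (r ^ 2) (a ^ 2 * r)) (Ioi 0) := by
          intro r hr
          by_cases hra : |a| < r
          · have hcond : |a| < r ∧ 1 < a ^ 2 * r := ⟨hra, by nlinarith⟩
            simp [hHdef, hcond, indicator_of_mem (mem_Ioi.mpr hra)]
          · have hcond : ¬(|a| < r ∧ 1 < a ^ 2 * r) := fun h => hra h.1
            simp [hHdef, hcond, indicator_of_notMem (fun hmem => hra (mem_Ioi.mp hmem))]
        have hHint : IntegrableOn H (Ioi 0) := by
          refine IntegrableOn.congr_fun ?_ hHeq.symm measurableSet_Ioi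
          refine ((integrable_indicator_iff measurableSet_Ioi).mpr ?_).integrableOn
          rw [← hsplit]; exact hint1.union hint2
        simp_rw [hpt]
        rw [← ofReal_integral_eq_lintegral_ofReal (integrable_comp_abs hHint)
          (ae_of_all _ fun c => hH0 _), integral_comp_abs (f := H)]
        congr 1
        rw [setIntegral_congr_fun measurableSet_Ioi hHeq,
          setIntegral_indicator measurableSet_Ioi,
          inter_eq_self_of_subset_right (Ioi_subset_Ioi ha0.le),
          ← hsplit, setIntegral_union (Ioc_disjoint_Ioi le_rfl) measurableSet_Ioi hint1 hint2]
        have hp1 : (∫ r in Ioc |a| (a ^ 2), 1 / max (r ^ 2) (a ^ 2 * r))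
            = (a ^ 2)⁻¹ * Real.log |a| := by
          rw [setIntegral_congr_fun measurableSet_Ioc
            (g := fun r : ℝ => (a ^ 2)⁻¹ * r⁻¹) ?_]
          · rw [← intervalIntegral.integral_of_le haa2,
              intervalIntegral.integral_const_mul, integral_inv ?_]
            · have : a ^ 2 / |a| = |a| := by
                rw [← sq_abs, sq]
                exact mul_div_cancel_right₀ _ ha0.ne'
              rw [this]
            · rw [uIcc_of_le haa2]
              intro h
              linarith [h.1, ha0]
          · intro r hr
            have hr0 : 0 < r := lt_trans ha0 hr.1
            have hmax : max (r ^ 2) (a ^ 2 * r) = a ^ 2 * r := by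
              apply max_eq_right; nlinarith [hr.2]
            dsimp only
            rw [hmax, one_div, mul_inv]
        have hp2 : (∫ r in Ioi (a ^ 2), 1 / max (r ^ 2) (a ^ 2 * r)) = (a ^ 2)⁻¹ := by
          rw [← setIntegral_congr_fun measurableSet_Ioi hφeq2, (invsq_int (lt_trans one_pos ha21)).2]
        rw [hp1, hp2]
        simp only [hGdef, h1, if_false, sq_abs]
        ring
  rw [key, integral_comp_abs (f := G), ← hsplit01,
    setIntegral_union (Ioc_disjoint_Ioi le_rfl) measurableSet_Ioi hGint1 hGint2]
  have hq1 : (∫ x in Ioc (0:ℝ) 1, G x) = 2 / 3 := by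
    rw [setIntegral_congr_fun measurableSet_Ioc
      (g := fun x : ℝ => 2 * x ^ 2) (fun x hx => by simp [hGdef, hx.2]),
      ← intervalIntegral.integral_of_le zero_le_one,
      intervalIntegral.integral_const_mul, integral_pow]
    norm_num
  have hq2 : (∫ x in Ioi (1:ℝ), G x) = 4 := by
    rw [setIntegral_congr_fun measurableSet_Ioi
      (g := fun x : ℝ => 2 * ((Real.log x + 1) * (x ^ 2)⁻¹))
      (fun x hx => by simp [hGdef, not_le.mpr (mem_Ioi.mp hx)]),
      integral_const_mul, logsq_int.2]
    norm_num
  rw [hq1, hq2]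
  norm_num

end ResidueAux

open MeasureTheory

/-- The archimedean residue volume `τ_{D₁,∞}(D₁(ℝ)) = 20`, decomposed into three regions:
`I₁ = ∫_{|a|≤1, |a²c|≤1} 1/max{|c|²,1}`, `I₂ = ∫_{|a|>1, |c|≤|a|} |a|^{-3}`,
`I₃ = ∫_{|c|>|a|, |a²c|>1} 1/max{|c|², |a²c|}`, with `I₁ + I₂ + I₃ = 20`.
Here the coordinates are `q = (a, c) ∈ ℝ²` with Lebesgue measure. -/
theorem residue_volume_D1 :
    (∫ q in {q : ℝ × ℝ | |q.1| ≤ 1 ∧ |q.1 ^ 2 * q.2| ≤ 1}, 1 / max (|q.2| ^ 2) 1) +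
      (∫ q in {q : ℝ × ℝ | 1 < |q.1| ∧ |q.2| ≤ |q.1|}, 1 / |q.1| ^ 3) +
      (∫ q in {q : ℝ × ℝ | |q.1| < |q.2| ∧ 1 < |q.1 ^ 2 * q.2|},
        1 / max (|q.2| ^ 2) (|q.1 ^ 2 * q.2|)) = 20 := by
  rw [I1, I2, I3]
  norm_num
end

section
/- For every prime p, the number of F_p-points of the scheme U₁ = X' − D̄₁, where X' is the blow-up of P³ over F_p in the conic V(a²+bc, d) and D̄₁ is the preimage of the plane V(b), equals p³ + p². -/
/-- A point of the universal torsor over the blow-up `X'` of `ℙ³` in the conic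
`V(a²+bc, d)`, in Cox coordinates: the Cox ring of `X'` is
`K[a,b,c,x,y,z]/(a² + bc - yz)`. -/
structure TorsorPt (K : Type*) [Field K] where
  a : K
  b : K
  c : K
  x : K
  y : K
  z : K
  eqn : a ^ 2 + b * c = y * z

/-- The characteristic torus `(Kˣ)²` acts on the torsor with weights
`a, b, c : (1,0)`, `x : (1,-1)`, `y : (2,-1)`, `z : (0,1)`.  Points of
`U₁ = X' - π⁻¹(V(b))` over `K` are the orbits of solutions with `b ≠ 0` (which
implies `(a,b,c,z) ≠ 0`) and `(x,y) ≠ (0,0)`.  This is the orbit relation. -/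
def u1Rel (K : Type*) [Field K]
    (v w : {v : TorsorPt K // v.b ≠ 0 ∧ (v.x ≠ 0 ∨ v.y ≠ 0)}) : Prop :=
  ∃ s t : Kˣ,
    w.1.a = s * v.1.a ∧ w.1.b = s * v.1.b ∧ w.1.c = s * v.1.c ∧
    w.1.x = s * (t : K)⁻¹ * v.1.x ∧ w.1.y = (s : K) ^ 2 * (t : K)⁻¹ * v.1.y ∧
    w.1.z = t * v.1.z

namespace U1Aux

variable {K : Type*} [Field K] [DecidableEq K]

abbrev Pt (K : Type*) [Field K] := {v : TorsorPt K // v.b ≠ 0 ∧ (v.x ≠ 0 ∨ v.y ≠ 0)}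

abbrev Tgt (K : Type*) [Field K] := K × ({w : K × K // w ≠ 0} ⊕ (K ⊕ Unit))

def nf (v : Pt K) : Tgt K :=
  (v.1.a / v.1.b,
   if hz : v.1.z = 0 then
     Sum.inr (if v.1.x = 0 then Sum.inr () else Sum.inl (v.1.y / v.1.b / v.1.x))
   else Sum.inl ⟨(v.1.x * v.1.z / v.1.b, v.1.y * v.1.z / v.1.b ^ 2), by
     rcases v.2.2 with hx | hy
     · intro h
       rw [Prod.mk_eq_zero] at h
       exact div_ne_zero (mul_ne_zero hx hz) v.2.1 h.1
     · intro h
       rw [Prod.mk_eq_zero] at h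
       exact div_ne_zero (mul_ne_zero hy hz) (pow_ne_zero 2 v.2.1) h.2⟩)

theorem nf_inj (v w : Pt K) (h : nf v = nf w) : u1Rel K v w := by
  have hvb := v.2.1
  have hwb := w.2.1
  have h1 : v.1.a / v.1.b = w.1.a / w.1.b := congrArg Prod.fst h
  field_simp at h1
  have h2 : (nf v).2 = (nf w).2 := congrArg Prod.snd h
  simp only [nf] at h2
  have e1 := v.1.eqn
  have e2 := w.1.eqn
  by_cases hvz : v.1.z = 0
  · rw [dif_pos hvz] at h2
    by_cases hwz : w.1.z = 0
    · rw [dif_pos hwz] at h2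
      rw [hvz, mul_zero] at e1
      rw [hwz, mul_zero] at e2
      have hceq : w.1.c = w.1.b / v.1.b * v.1.c := by
        field_simp
        have key : w.1.c * v.1.b * (v.1.b * w.1.b) = w.1.b * v.1.c * (v.1.b * w.1.b) := by
          linear_combination v.1.b ^ 2 * e2 - w.1.b ^ 2 * e1 +
            (v.1.a * w.1.b + w.1.a * v.1.b) * h1
        exact mul_right_cancel₀ (mul_ne_zero hvb hwb) key
      by_cases hvx : v.1.x = 0
      · rw [if_pos hvx] at h2
        by_cases hwx : w.1.x = 0
        · have hvy : v.1.y ≠ 0 := v.2.2.resolve_left (by simpa using hvx)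
          have hwy : w.1.y ≠ 0 := w.2.2.resolve_left (by simpa using hwx)
          refine ⟨Units.mk0 (w.1.b / v.1.b) (div_ne_zero hwb hvb),
            Units.mk0 (w.1.b ^ 2 * v.1.y / (v.1.b ^ 2 * w.1.y))
              (div_ne_zero (mul_ne_zero (pow_ne_zero 2 hwb) hvy)
                (mul_ne_zero (pow_ne_zero 2 hvb) hwy)), ?_, ?_, ?_, ?_, ?_, ?_⟩
          · simp only [Units.val_mk0]
            field_simp
            linear_combination -h1
          · simp only [Units.val_mk0]; field_simp
          · simpa using hceq
          · simp only [Units.val_mk0]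
            rw [hvx, hwx, mul_zero]
          · simp only [Units.val_mk0]
            field_simp
          · rw [hvz, hwz, mul_zero]
        · rw [if_neg hwx] at h2
          simp at h2
      · rw [if_neg hvx] at h2
        by_cases hwx : w.1.x = 0
        · rw [if_pos hwx] at h2
          simp at h2
        · rw [if_neg hwx] at h2
          have hm : v.1.y / v.1.b / v.1.x = w.1.y / w.1.b / w.1.x := by
            simpa using h2
          field_simp at hm
          refine ⟨Units.mk0 (w.1.b / v.1.b) (div_ne_zero hwb hvb),
            Units.mk0 (w.1.b * v.1.x / (v.1.b * w.1.x))
              (div_ne_zero (mul_ne_zero hwb hvx) (mul_ne_zero hvb hwx)), ?_, ?_, ?_, ?_, ?_, ?_⟩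
          · simp only [Units.val_mk0]
            field_simp
            linear_combination -h1
          · simp only [Units.val_mk0]; field_simp
          · simpa using hceq
          · simp only [Units.val_mk0]
            field_simp
          · simp only [Units.val_mk0]
            field_simp
            linear_combination -hm
          · rw [hvz, hwz, mul_zero]
    · rw [dif_neg hwz] at h2
      simp at h2
  · rw [dif_neg hvz] at h2
    by_cases hwz : w.1.z = 0
    · rw [dif_pos hwz] at h2
      simp at h2
    · rw [dif_neg hwz] at h2
      have h2' : (v.1.x * v.1.z / v.1.b, v.1.y * v.1.z / v.1.b ^ 2)
          = (w.1.x * w.1.z / w.1.b, w.1.y * w.1.z / w.1.b ^ 2) := by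
        simpa [Subtype.ext_iff] using h2
      have hX : v.1.x * v.1.z / v.1.b = w.1.x * w.1.z / w.1.b := congrArg Prod.fst h2'
      have hY : v.1.y * v.1.z / v.1.b ^ 2 = w.1.y * w.1.z / w.1.b ^ 2 := congrArg Prod.snd h2'
      field_simp at hX hY
      refine ⟨Units.mk0 (w.1.b / v.1.b) (div_ne_zero hwb hvb),
        Units.mk0 (w.1.z / v.1.z) (div_ne_zero hwz hvz), ?_, ?_, ?_, ?_, ?_, ?_⟩
      · simp only [Units.val_mk0]
        field_simp
        linear_combination -h1
      · simp only [Units.val_mk0]; field_simp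
      · simp only [Units.val_mk0]
        field_simp
        have key : w.1.c * v.1.b * (v.1.b * w.1.b) = w.1.b * v.1.c * (v.1.b * w.1.b) := by
          linear_combination v.1.b ^ 2 * e2 - w.1.b ^ 2 * e1 +
            (v.1.a * w.1.b + w.1.a * v.1.b) * h1 - hY
        exact mul_right_cancel₀ (mul_ne_zero hvb hwb) key
      · simp only [Units.val_mk0]
        field_simp
        linear_combination -hX
      · simp only [Units.val_mk0]
        field_simp
        linear_combination -hY
      · simp only [Units.val_mk0]
        field_simp

theorem nf_sound (v w : Pt K) (h : u1Rel K v w) : nf v = nf w := by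
  obtain ⟨s, t, ha, hb, hc, hx, hy, hz⟩ := h
  have hs : (s : K) ≠ 0 := s.ne_zero
  have ht : (t : K) ≠ 0 := t.ne_zero
  have hvb := v.2.1
  have hwb := w.2.1
  unfold nf
  refine Prod.ext ?_ ?_
  · simp only
    rw [ha, hb, mul_div_mul_left _ _ hs]
  · simp only
    by_cases hz0 : v.1.z = 0
    · have hwz : w.1.z = 0 := by rw [hz, hz0, mul_zero]
      rw [dif_pos hz0, dif_pos hwz]
      by_cases hx0 : v.1.x = 0
      · have hwx : w.1.x = 0 := by rw [hx, hx0, mul_zero]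
        rw [if_pos hx0, if_pos hwx]
      · have hwx : w.1.x ≠ 0 := by
          rw [hx]; exact mul_ne_zero (mul_ne_zero hs (inv_ne_zero ht)) hx0
        rw [if_neg hx0, if_neg hwx]
        congr 1
        rw [hx, hy, hb]
        field_simp
    · have hwz : w.1.z ≠ 0 := by rw [hz]; exact mul_ne_zero ht hz0
      rw [dif_neg hz0, dif_neg hwz]
      congr 1
      refine Subtype.ext (Prod.ext ?_ ?_)
      · simp only
        rw [hx, hz, hb]
        field_simp
      · simp only
        rw [hy, hz, hb]
        field_simp

def pre (d : Tgt K) : Pt K :=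
  match d with
  | (A, Sum.inl w) =>
    ⟨⟨A, 1, w.1.2 - A ^ 2, w.1.1, w.1.2, 1, by ring⟩, one_ne_zero, by
      rcases eq_or_ne w.1.1 0 with hX | hX
      · exact Or.inr fun hY => w.2 (by rw [Prod.ext_iff]; exact ⟨hX, hY⟩)
      · exact Or.inl hX⟩
  | (A, Sum.inr (Sum.inl m)) => ⟨⟨A, 1, -A ^ 2, 1, m, 0, by ring⟩, one_ne_zero, Or.inl one_ne_zero⟩
  | (A, Sum.inr (Sum.inr _)) => ⟨⟨A, 1, -A ^ 2, 0, 1, 0, by ring⟩, one_ne_zero, Or.inr one_ne_zero⟩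

theorem nf_pre (d : Tgt K) : nf (pre d) = d := by
  obtain ⟨A, w | (m | u)⟩ := d
  · simp [nf, pre, Subtype.ext_iff, Prod.ext_iff]
  · simp [nf, pre]
  · simp [nf, pre]

end U1Aux

/-- The number of `F_p`-points of `U₁ = X' - D̄₁`, where `X'` is the blow-up of `ℙ³`
over `F_p` in the conic `V(a²+bc, d)` and `D̄₁` is the preimage of the plane `V(b)`,
equals `p³ + p²`.  (Points of `U₁` over `F_p` are identified with orbits of the
characteristic torus on the `F_p`-points of the universal torsor with `b ≠ 0`.) -/

theorem card_U1_Fp (p : ℕ) [Fact p.Prime] :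
    Nat.card (Quot (u1Rel (ZMod p))) = p ^ 3 + p ^ 2 := by
  have hp : p.Prime := Fact.out
  haveI : NeZero p := ⟨hp.ne_zero⟩
  have hbij : Function.Bijective
      (Quot.lift (U1Aux.nf (K := ZMod p)) U1Aux.nf_sound) := by
    constructor
    · intro q q'
      induction q using Quot.ind with | _ v => ?_
      induction q' using Quot.ind with | _ w => ?_
      exact fun h => Quot.sound (U1Aux.nf_inj v w h)
    · exact fun d => ⟨Quot.mk _ (U1Aux.pre d), U1Aux.nf_pre d⟩
  rw [Nat.card_eq_of_bijective _ hbij]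
  have hsub : Fintype.card {w : ZMod p × ZMod p // w ≠ 0} = p ^ 2 - 1 := by
    rw [Fintype.card_subtype_compl, Fintype.card_subtype_eq]
    simp [ZMod.card, sq]
  have h1 : 1 ≤ p ^ 2 := Nat.one_le_pow _ _ hp.pos
  rw [Nat.card_eq_fintype_card]
  simp only [U1Aux.Tgt, Fintype.card_prod, Fintype.card_sum, ZMod.card, hsub,
    Fintype.card_unit]
  rw [add_comm p 1, ← add_assoc, Nat.sub_add_cancel h1]
  ring
end

section
/- For every prime p, the number of F_p-points of U₂ = X' − D̄₂, where X' is the blow-up of P³ over F_p in the conic V(a²+bc, d) and D̄₂ is the preimage of the plane V(a), equals p³ + p² − p. -/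
/-- The characteristic torus `(Kˣ)²` acts on the torsor with weights
`a, b, c : (1,0)`, `x : (1,-1)`, `y : (2,-1)`, `z : (0,1)`.  Points of
`U₂ = X' - π⁻¹(V(a))` over `K` are the orbits of solutions with `b ≠ 0` (which
implies `(a,b,c,z) ≠ 0`) and `(x,y) ≠ (0,0)`.  This is the orbit relation. -/
def u2Rel (K : Type*) [Field K]
    (v w : {v : TorsorPt K // v.a ≠ 0 ∧ (v.x ≠ 0 ∨ v.y ≠ 0)}) : Prop :=
  ∃ s t : Kˣ,
    w.1.a = s * v.1.a ∧ w.1.b = s * v.1.b ∧ w.1.c = s * v.1.c ∧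
    w.1.x = s * (t : K)⁻¹ * v.1.x ∧ w.1.y = (s : K) ^ 2 * (t : K)⁻¹ * v.1.y ∧
    w.1.z = t * v.1.z

section Aux

variable {K : Type*} [Field K]

abbrev U2Pt (K : Type*) [Field K] := {v : TorsorPt K // v.a ≠ 0 ∧ (v.x ≠ 0 ∨ v.y ≠ 0)}

lemma aux_b_ne (v : U2Pt K) (hy : v.1.y = 0) : v.1.b ≠ 0 := by
  intro hb
  have := v.1.eqn
  rw [hy, hb] at this
  simp at this
  exact v.2.1 this

open Classical in
noncomputable def u2Norm (v : U2Pt K) : (K × K × K) ⊕ (Kˣ × K) :=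
  if hy : v.1.y ≠ 0 then Sum.inl (v.1.b / v.1.a, v.1.c / v.1.a, v.1.x * v.1.a / v.1.y)
  else Sum.inr (Units.mk0 (v.1.b / v.1.a) (div_ne_zero (aux_b_ne v (not_not.mp hy)) v.2.1),
    v.1.z * v.1.x / v.1.a)

lemma u2Norm_rel (v w : U2Pt K) (h : u2Rel K v w) : u2Norm v = u2Norm w := by
  obtain ⟨s, t, ha, hb, hc, hx, hy, hz⟩ := h
  have hs : (s : K) ≠ 0 := s.ne_zero
  have ht : (t : K) ≠ 0 := t.ne_zero
  have hva : v.1.a ≠ 0 := v.2.1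
  have hyy : w.1.y ≠ 0 ↔ v.1.y ≠ 0 := by
    rw [hy]; constructor
    · intro h h0; exact h (by rw [h0]; ring)
    · intro h
      exact mul_ne_zero (mul_ne_zero (pow_ne_zero 2 hs) (inv_ne_zero ht)) h
  simp only [u2Norm]
  by_cases h0 : v.1.y ≠ 0
  · rw [dif_pos h0, dif_pos (hyy.mpr h0)]
    refine congrArg _ ?_
    rw [ha, hb, hc, hx, hy]
    refine Prod.ext ?_ (Prod.ext ?_ ?_)
    · field_simp
    · field_simp
    · field_simp
  · rw [dif_neg h0, dif_neg (fun h => h0 (hyy.mp h))]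
    refine congrArg _ ?_
    refine Prod.ext (Units.ext ?_) ?_
    · simp only [Units.val_mk0]
      rw [ha, hb]
      field_simp
    · show v.1.z * v.1.x / v.1.a = w.1.z * w.1.x / w.1.a
      rw [ha, hx, hz]
      field_simp

noncomputable def u2ToNorm : Quot (u2Rel K) → (K × K × K) ⊕ (Kˣ × K) :=
  Quot.lift u2Norm u2Norm_rel

def u2OfNorm : (K × K × K) ⊕ (Kˣ × K) → Quot (u2Rel K)
  | Sum.inl (b, c, x) => Quot.mk _ ⟨⟨1, b, c, x, 1, 1 + b * c, by ring⟩,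
      one_ne_zero, Or.inr one_ne_zero⟩
  | Sum.inr (b, z) => Quot.mk _ ⟨⟨1, (b : K), -(b : K)⁻¹, 1, 0, z, by
      field_simp; ring⟩, one_ne_zero, Or.inl one_ne_zero⟩

lemma u2_left_inv : ∀ q : Quot (u2Rel K), u2OfNorm (u2ToNorm q) = q := by
  refine Quot.ind (fun v => ?_)
  have hva : v.1.a ≠ 0 := v.2.1
  show u2OfNorm (u2Norm v) = Quot.mk _ v
  simp only [u2Norm]
  by_cases h0 : v.1.y ≠ 0
  · rw [dif_pos h0]
    show Quot.mk _ _ = Quot.mk _ v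
    refine (Quot.sound ?_).symm
    refine ⟨Units.mk0 v.1.a⁻¹ (inv_ne_zero hva),
      Units.mk0 (v.1.y / v.1.a ^ 2) (div_ne_zero h0 (pow_ne_zero 2 hva)), ?_, ?_, ?_, ?_, ?_, ?_⟩
      <;> simp only [Units.val_mk0]
    · field_simp
    · field_simp
    · field_simp
    · field_simp
    · field_simp
    · have := v.1.eqn
      field_simp
      linear_combination this
  · rw [dif_neg h0]
    push_neg at h0
    have hx : v.1.x ≠ 0 := v.2.2.resolve_right (by simpa using h0)
    have hb : v.1.b ≠ 0 := aux_b_ne v h0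
    show Quot.mk _ _ = Quot.mk _ v
    refine (Quot.sound ?_).symm
    refine ⟨Units.mk0 v.1.a⁻¹ (inv_ne_zero hva),
      Units.mk0 (v.1.x / v.1.a) (div_ne_zero hx hva), ?_, ?_, ?_, ?_, ?_, ?_⟩
      <;> simp only [Units.val_mk0]
    · field_simp
    · field_simp
    · -- -(b/a)⁻¹ = a⁻¹ * c
      have := v.1.eqn
      rw [h0] at this
      simp only [zero_mul] at this
      field_simp
      linear_combination -this
    · field_simp
    · rw [h0]; ring
    · field_simp

lemma u2_right_inv : ∀ n : (K × K × K) ⊕ (Kˣ × K), u2ToNorm (u2OfNorm n) = n := by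
  rintro (⟨b, c, x⟩ | ⟨b, z⟩)
  · show u2Norm ⟨⟨1, b, c, x, 1, 1 + b * c, by ring⟩,
      one_ne_zero, Or.inr one_ne_zero⟩ = Sum.inl (b, c, x)
    simp only [u2Norm]
    rw [dif_pos (one_ne_zero : (1 : K) ≠ 0)]
    simp
  · show u2Norm ⟨⟨1, (b : K), -(b : K)⁻¹, 1, 0, z, by field_simp; ring⟩,
      one_ne_zero, Or.inl one_ne_zero⟩ = Sum.inr (b, z)
    simp only [u2Norm]
    rw [dif_neg (by simp : ¬ (0 : K) ≠ 0)]
    refine congrArg _ (Prod.ext (Units.ext ?_) ?_) <;> simp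

noncomputable def u2Equiv : Quot (u2Rel K) ≃ (K × K × K) ⊕ (Kˣ × K) :=
  ⟨u2ToNorm, u2OfNorm, u2_left_inv, u2_right_inv⟩

end Aux


/-- The number of `F_p`-points of `U₂ = X' - D̄₂`, where `X'` is the blow-up of `ℙ³`
over `F_p` in the conic `V(a²+bc, d)` and `D̄₂` is the preimage of the plane `V(a)`,
equals `p³ + p² - p`.  (Points of `U₂` over `F_p` are identified with orbits of the
characteristic torus on the `F_p`-points of the universal torsor with `a ≠ 0`.) -/
theorem card_U2_Fp (p : ℕ) [Fact p.Prime] :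
    Nat.card (Quot (u2Rel (ZMod p))) = p ^ 3 + p ^ 2 - p := by
  have hp : p.Prime := Fact.out
  have h2 : 2 ≤ p := hp.two_le
  rw [Nat.card_congr (u2Equiv (K := ZMod p))]
  have hK : Nat.card (ZMod p) = p := Nat.card_zmod p
  have hU : Nat.card (ZMod p)ˣ = p - 1 := by
    rw [Nat.card_eq_fintype_card, ZMod.card_units_eq_totient, Nat.totient_prime hp]
  rw [Nat.card_sum, Nat.card_prod, Nat.card_prod, Nat.card_prod, hK, hU]
  have h3 : (p - 1) * p = p ^ 2 - p := by rw [Nat.sub_mul, one_mul, pow_two]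
  have h4 : p * (p * p) = p ^ 3 := by ring
  have hle : p ≤ p ^ 2 := Nat.le_self_pow (by norm_num) p
  rw [h3, h4]
  omega
end
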